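/- Feasibility of fairness: in a transition system in which only countably many tasks are enabled in each state, every finite path can be extended to a strongly fair (hence also weakly fair) path. That is, for every finite path π₀ there exists a strongly fair path π having π₀ as a prefix. -/

import Mathlib

/-- A transition system: states `S`, transitions `Tr`, with source/target maps
and a set of initial states. -/
structure TS (S Tr : Type) where
  source : Tr → S
  target : Tr → S
  init : Set S

/-- A (finite or infinite) path in a transition system: `len` is the number of
transitions (`⊤` for an infinite path); states are indexed `0..len` and
transitions `0..len-1`. -/
structure TSPath {S Tr : Type} (G : TS S Tr) where
  len : ℕ∞
  state : ℕ → S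
  trans : ℕ → Tr
  src_ok : ∀ i : ℕ, (i : ℕ∞) < len → G.source (trans i) = state i
  tgt_ok : ∀ i : ℕ, (i : ℕ∞) < len → G.target (trans i) = state (i + 1)

variable {S Tr : Type}

/-- A task `T` is enabled in a state `s` if some transition in `T` has source `s`. -/
def TS.enabled (G : TS S Tr) (T : Set Tr) (s : S) : Prop :=
  ∃ t ∈ T, G.source t = s

/-- A path is rooted if it starts in an initial state. -/
def TSPath.rooted {G : TS S Tr} (π : TSPath G) : Prop :=
  π.state 0 ∈ G.init

/-- The path visits the set of states `Ge`. -/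
def TSPath.visits {G : TS S Tr} (π : TSPath G) (Ge : Set S) : Prop :=
  ∃ i : ℕ, (i : ℕ∞) ≤ π.len ∧ π.state i ∈ Ge

/-- The task `T` occurs in the suffix of `π` starting at index `k`. -/
def TSPath.occursFrom {G : TS S Tr} (π : TSPath G) (T : Set Tr) (k : ℕ) : Prop :=
  ∃ i : ℕ, k ≤ i ∧ (i : ℕ∞) < π.len ∧ π.trans i ∈ T

/-- `T` is perpetually enabled on the suffix of `π` starting at index `k`:
enabled in every state of that suffix. -/
def TSPath.perpEnabledFrom {G : TS S Tr} (π : TSPath G) (T : Set Tr) (k : ℕ) : Prop :=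
  ∀ i : ℕ, k ≤ i → (i : ℕ∞) ≤ π.len → G.enabled T (π.state i)

/-- `T` is relentlessly enabled on the suffix of `π` starting at index `k`:
every suffix of that suffix contains a state in which `T` is enabled. -/
def TSPath.relEnabledFrom {G : TS S Tr} (π : TSPath G) (T : Set Tr) (k : ℕ) : Prop :=
  ∀ j : ℕ, k ≤ j → (j : ℕ∞) ≤ π.len →
    ∃ i : ℕ, j ≤ i ∧ (i : ℕ∞) ≤ π.len ∧ G.enabled T (π.state i)

/-- Weak fairness: for every suffix, each task perpetually enabled on that
suffix occurs in it. -/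
def TSPath.weaklyFair {G : TS S Tr} (π : TSPath G) (𝒯 : Set (Set Tr)) : Prop :=
  ∀ T ∈ 𝒯, ∀ k : ℕ, (k : ℕ∞) ≤ π.len → π.perpEnabledFrom T k → π.occursFrom T k

/-- Strong fairness: for every suffix, each task relentlessly enabled on that
suffix occurs in it. -/
def TSPath.stronglyFair {G : TS S Tr} (π : TSPath G) (𝒯 : Set (Set Tr)) : Prop :=
  ∀ T ∈ 𝒯, ∀ k : ℕ, (k : ℕ∞) ≤ π.len → π.relEnabledFrom T k → π.occursFrom T k

/-- A path is progressing if it is infinite or its last state has no outgoing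
transition. -/
def TSPath.progressing {G : TS S Tr} (π : TSPath G) : Prop :=
  π.len = ⊤ ∨ ∃ n : ℕ, π.len = (n : ℕ∞) ∧ ∀ t : Tr, G.source t ≠ π.state n

/-- `π₀` is a prefix of `π`. -/
def TSPath.isPrefixOf {G : TS S Tr} (π₀ π : TSPath G) : Prop :=
  π₀.len ≤ π.len ∧ (∀ i : ℕ, (i : ℕ∞) ≤ π₀.len → π.state i = π₀.state i) ∧
    (∀ i : ℕ, (i : ℕ∞) < π₀.len → π.trans i = π₀.trans i)

/-- Feasibility of fairness: if in each state only countably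
many tasks are enabled, then every finite path extends to a strongly fair
path. -/
def Pend (G : TS S Tr) (E : S → ℕ → Set Tr) (s : ℕ → S) (t : ℕ → Tr) (n m : ℕ) : Prop :=
  m ≤ n ∧ G.enabled (E (s (Nat.unpair m).1) (Nat.unpair m).2) (s n) ∧
    ∀ l, m ≤ l → l < n → t l ∉ E (s (Nat.unpair m).1) (Nat.unpair m).2

open Classical in
noncomputable def pickT (G : TS S Tr) (E : S → ℕ → Set Tr) (d : Tr)
    (s : ℕ → S) (t : ℕ → Tr) (n : ℕ) : Tr :=
  if hdead : ∃ u : Tr, G.source u = s n then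
    if hA : ∃ m, Pend G E s t n m then
      (Nat.find_spec hA).2.1.choose
    else hdead.choose
  else d

open Classical in
lemma pickT_src (G : TS S Tr) (E : S → ℕ → Set Tr) (d : Tr) (s : ℕ → S) (t : ℕ → Tr) (n : ℕ)
    (hdead : ∃ u : Tr, G.source u = s n) :
    G.source (pickT G E d s t n) = s n := by
  unfold pickT
  rw [dif_pos hdead]
  by_cases hA : ∃ m, Pend G E s t n m
  · rw [dif_pos hA]
    exact (Nat.find_spec hA).2.1.choose_spec.2
  · rw [dif_neg hA]
    exact hdead.choose_spec

open Classical in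
lemma pickT_mem (G : TS S Tr) (E : S → ℕ → Set Tr) (d : Tr) (s : ℕ → S) (t : ℕ → Tr) (n : ℕ)
    (hdead : ∃ u : Tr, G.source u = s n)
    (hA : ∃ m, Pend G E s t n m) :
    pickT G E d s t n ∈ E (s (Nat.unpair (Nat.find hA)).1) (Nat.unpair (Nat.find hA)).2 := by
  unfold pickT
  rw [dif_pos hdead, dif_pos hA]
  exact (Nat.find_spec hA).2.1.choose_spec.1

lemma Pend_congr (G : TS S Tr) (E : S → ℕ → Set Tr) {s s' : ℕ → S} {t t' : ℕ → Tr} {n : ℕ}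
    (hs : ∀ i ≤ n, s i = s' i) (ht : ∀ l < n, t l = t' l) (m : ℕ) :
    Pend G E s t n m ↔ Pend G E s' t' n m := by
  unfold Pend
  constructor
  · rintro ⟨h1, h2, h3⟩
    have e1 : s (Nat.unpair m).1 = s' (Nat.unpair m).1 :=
      hs _ (le_trans (Nat.unpair_left_le m) h1)
    have e2 : s n = s' n := hs n le_rfl
    refine ⟨h1, by rw [← e1, ← e2]; exact h2, fun l h4 h5 => ?_⟩
    rw [← e1, ← ht l h5]; exact h3 l h4 h5
  · rintro ⟨h1, h2, h3⟩
    have e1 : s (Nat.unpair m).1 = s' (Nat.unpair m).1 :=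
      hs _ (le_trans (Nat.unpair_left_le m) h1)
    have e2 : s n = s' n := hs n le_rfl
    refine ⟨h1, by rw [e1, e2]; exact h2, fun l h4 h5 => ?_⟩
    rw [e1, ht l h5]; exact h3 l h4 h5

open Classical in
lemma find_congr'' {p q : ℕ → Prop} (h : ∀ n, p n ↔ q n) (hp : ∃ n, p n) (hq : ∃ n, q n) :
    Nat.find hp = Nat.find hq := by
  apply le_antisymm
  · exact Nat.find_le ((h _).mpr (Nat.find_spec hq))
  · exact Nat.find_le ((h _).mp (Nat.find_spec hp))


open Classical in
noncomputable def fairSeq (G : TS S Tr) (E : S → ℕ → Set Tr) (π₀ : TSPath G) (n₀ : ℕ)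
    (n : ℕ) : S × Tr :=
  let sfun : ℕ → S := fun i => if h : i < n then (fairSeq G E π₀ n₀ i).1 else π₀.state 0
  let tfun : ℕ → Tr := fun l => if h : l < n then (fairSeq G E π₀ n₀ l).2 else π₀.trans 0
  let cur : S :=
    if n ≤ n₀ then π₀.state n
    else if _h : ∃ u : Tr, G.source u = sfun (n-1) then G.target (tfun (n-1)) else sfun (n-1)
  (cur, if n < n₀ then π₀.trans n else pickT G E (π₀.trans 0) (fun i => if i < n then sfun i else cur) tfun n)
termination_by n
decreasing_by all_goals omega

lemma fairSeq_state_le (G : TS S Tr) (E : S → ℕ → Set Tr) (π₀ : TSPath G) (n₀ : ℕ)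
    {n : ℕ} (hn : n ≤ n₀) : (fairSeq G E π₀ n₀ n).1 = π₀.state n := by
  rw [fairSeq]
  simp only [if_pos hn]

open Classical in
lemma fairSeq_state_succ (G : TS S Tr) (E : S → ℕ → Set Tr) (π₀ : TSPath G) (n₀ : ℕ)
    {n : ℕ} (hn : n₀ ≤ n) : (fairSeq G E π₀ n₀ (n+1)).1 =
      if ∃ u : Tr, G.source u = (fairSeq G E π₀ n₀ n).1 then G.target (fairSeq G E π₀ n₀ n).2
      else (fairSeq G E π₀ n₀ n).1 := by
  conv_lhs => rw [fairSeq]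
  by_cases h0 : n + 1 ≤ n₀
  · omega
  · simp only [if_neg h0]
    have hlt : n < n + 1 := Nat.lt_succ_self n
    simp only [Nat.add_sub_cancel, dif_pos hlt]
    rw [dite_eq_ite]

lemma fairSeq_trans_lt (G : TS S Tr) (E : S → ℕ → Set Tr) (π₀ : TSPath G) (n₀ : ℕ)
    {n : ℕ} (hn : n < n₀) : (fairSeq G E π₀ n₀ n).2 = π₀.trans n := by
  rw [fairSeq]
  simp only [if_pos hn]

lemma fairSeq_trans_ge (G : TS S Tr) (E : S → ℕ → Set Tr) (π₀ : TSPath G) (n₀ : ℕ)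
    {n : ℕ} (hn : n₀ ≤ n) :
    ∃ s' : ℕ → S, ∃ t' : ℕ → Tr,
      (∀ i ≤ n, s' i = (fairSeq G E π₀ n₀ i).1) ∧
      (∀ l, l < n → t' l = (fairSeq G E π₀ n₀ l).2) ∧
      (fairSeq G E π₀ n₀ n).2 = pickT G E (π₀.trans 0) s' t' n := by
  refine ⟨fun i => if i < n then (if h : i < n then (fairSeq G E π₀ n₀ i).1 else π₀.state 0)
      else (fairSeq G E π₀ n₀ n).1,
    fun l => if h : l < n then (fairSeq G E π₀ n₀ l).2 else π₀.trans 0, ?_, ?_, ?_⟩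
  · intro i hi
    rcases lt_or_eq_of_le hi with h | h
    · simp [h]
    · simp [h]
  · intro l hl; simp [hl]
  · conv_lhs => rw [fairSeq]
    by_cases h0 : n < n₀
    · omega
    · simp only [if_neg h0]
      congr 1
      funext i
      by_cases h : i < n
      · simp [h]
      · simp only [if_neg h]
        by_cases hc : n ≤ n₀
        · rw [fairSeq_state_le G E π₀ n₀ hc]
          simp [hc]
        · obtain ⟨p, rfl⟩ : ∃ p, n = p + 1 := ⟨n - 1, by omega⟩
          have h1 : n₀ ≤ p := by omega
          rw [fairSeq_state_succ G E π₀ n₀ h1]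
          have h3 : p < p + 1 := by omega
          simp only [if_neg hc, Nat.add_sub_cancel, dif_pos h3, dite_eq_ite, if_pos h3]
          have e : (if p + 1 - 1 < p + 1 then (fairSeq G E π₀ n₀ (p + 1 - 1)).1 else π₀.state 0) = (fairSeq G E π₀ n₀ p).1 := by
            simp
          by_cases hx : ∃ u, G.source u = (fairSeq G E π₀ n₀ p).1
          · rw [if_pos (by rw [e]; exact hx : (∃ u, G.source u = if p + 1 - 1 < p + 1 then (fairSeq G E π₀ n₀ (p + 1 - 1)).1 else π₀.state 0)), if_pos hx]
          · rw [if_neg (by rw [e]; exact hx : ¬(∃ u, G.source u = if p + 1 - 1 < p + 1 then (fairSeq G E π₀ n₀ (p + 1 - 1)).1 else π₀.state 0)), if_neg hx]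

open Classical in
lemma pickT_spec' (G : TS S Tr) (E : S → ℕ → Set Tr) (d : Tr) {s s' : ℕ → S} {t t' : ℕ → Tr}
    {n : ℕ} (hs : ∀ i ≤ n, s' i = s i) (ht : ∀ l, l < n → t' l = t l)
    (hdead : ∃ u : Tr, G.source u = s n) (hA : ∃ m, Pend G E s t n m) :
    G.source (pickT G E d s' t' n) = s n ∧
    pickT G E d s' t' n ∈ E (s (Nat.unpair (Nat.find hA)).1) (Nat.unpair (Nat.find hA)).2 := by
  have hiff : ∀ m, Pend G E s' t' n m ↔ Pend G E s t n m :=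
    Pend_congr G E hs ht
  have hA' : ∃ m, Pend G E s' t' n m := ⟨hA.choose, (hiff _).mpr hA.choose_spec⟩
  have hdead' : ∃ u : Tr, G.source u = s' n := by rw [hs n le_rfl]; exact hdead
  have hfind : Nat.find hA' = Nat.find hA := find_congr'' hiff hA' hA
  have hle : Nat.find hA ≤ n := (Nat.find_spec hA).1
  have h2 := pickT_mem G E d s' t' n hdead' hA'
  rw [hfind, hs _ (le_trans (Nat.unpair_left_le _) hle)] at h2
  refine ⟨?_, h2⟩
  rw [pickT_src G E d s' t' n hdead', hs n le_rfl]


theorem feasibility_of_strong_fairness (G : TS S Tr) (𝒯 : Set (Set Tr))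
    (hcount : ∀ s : S, Set.Countable {T | T ∈ 𝒯 ∧ G.enabled T s})
    (π₀ : TSPath G) (hfin : π₀.len ≠ ⊤) :
    ∃ π : TSPath G, π₀.isPrefixOf π ∧ π.stronglyFair 𝒯 := by
  classical
  obtain ⟨E, hE⟩ : ∃ E : S → ℕ → Set Tr, ∀ s T, T ∈ 𝒯 → G.enabled T s → ∃ j, E s j = T := by
    have h : ∀ s : S, ∃ f : ℕ → Set Tr, ∀ T, T ∈ 𝒯 → G.enabled T s → ∃ j, f j = T := by
      intro s
      rcases Set.eq_empty_or_nonempty {T | T ∈ 𝒯 ∧ G.enabled T s} with h | h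
      · refine ⟨fun _ => ∅, fun T hT hen => absurd ?_ (Set.eq_empty_iff_forall_notMem.mp h T)⟩
        exact ⟨hT, hen⟩
      · obtain ⟨f, hf⟩ := Set.Countable.exists_eq_range (hcount s) h
        refine ⟨f, fun T hT hen => ?_⟩
        have hmem : T ∈ Set.range f := by rw [← hf]; exact ⟨hT, hen⟩
        obtain ⟨j, hj⟩ := hmem
        exact ⟨j, hj⟩
    choose E hE using h
    exact ⟨E, hE⟩
  set n₀ : ℕ := π₀.len.toNat with hn₀def
  have hlen0 : π₀.len = (n₀ : ℕ∞) := (ENat.coe_toNat hfin).symm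
  set s : ℕ → S := fun n => (fairSeq G E π₀ n₀ n).1 with hsdef
  set t : ℕ → Tr := fun n => (fairSeq G E π₀ n₀ n).2 with htdef
  have hs0 : ∀ n, n ≤ n₀ → s n = π₀.state n := fun n hn => fairSeq_state_le G E π₀ n₀ hn
  have hssucc : ∀ n, n₀ ≤ n →
      s (n+1) = if ∃ u : Tr, G.source u = s n then G.target (t n) else s n :=
    fun n hn => fairSeq_state_succ G E π₀ n₀ hn
  have ht0 : ∀ n, n < n₀ → t n = π₀.trans n := fun n hn => fairSeq_trans_lt G E π₀ n₀ hn
  have htge : ∀ n, n₀ ≤ n → ∃ s' t', (∀ i ≤ n, s' i = s i) ∧ (∀ l, l < n → t' l = t l) ∧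
      t n = pickT G E (π₀.trans 0) s' t' n := fun n hn => fairSeq_trans_ge G E π₀ n₀ hn
  have hsrc : ∀ i, (i < n₀ ∨ (n₀ ≤ i ∧ ∃ u : Tr, G.source u = s i)) → G.source (t i) = s i := by
    intro i hi
    rcases hi with hi | ⟨hi, hdead⟩
    · rw [ht0 i hi, hs0 i (le_of_lt hi)]
      exact π₀.src_ok i (by rw [hlen0]; exact_mod_cast hi)
    · obtain ⟨s', t', hs', ht', heq⟩ := htge i hi
      rw [heq, pickT_src G E _ s' t' i (by rw [hs' i le_rfl]; exact hdead), hs' i le_rfl]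
  have htgt : ∀ i, (i < n₀ ∨ (n₀ ≤ i ∧ ∃ u : Tr, G.source u = s i)) →
      G.target (t i) = s (i+1) := by
    intro i hi
    rcases hi with hi | ⟨hi, hdead⟩
    · rw [ht0 i hi, hs0 (i+1) hi]
      exact π₀.tgt_ok i (by rw [hlen0]; exact_mod_cast hi)
    · rw [hssucc i hi, if_pos hdead]
  by_cases hD : ∃ n, n₀ ≤ n ∧ ∀ u : Tr, G.source u ≠ s n
  · -- deadlock is reached: finite fair path
    set N := Nat.find hD with hNdef
    have hN1 : n₀ ≤ N := (Nat.find_spec hD).1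
    have hN2 : ∀ u : Tr, G.source u ≠ s N := (Nat.find_spec hD).2
    have hish : ∀ i, i < N → i < n₀ ∨ (n₀ ≤ i ∧ ∃ u : Tr, G.source u = s i) := by
      intro i hiN
      by_cases hi : i < n₀
      · exact Or.inl hi
      · push_neg at hi
        have hmin := Nat.find_min hD hiN
        push_neg at hmin
        exact Or.inr ⟨hi, hmin hi⟩
    refine ⟨⟨(N : ℕ∞), s, t, ?_, ?_⟩, ⟨?_, ?_, ?_⟩, ?_⟩
    · intro i hiN
      exact hsrc i (hish i (by exact_mod_cast hiN))
    · intro i hiN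
      exact htgt i (hish i (by exact_mod_cast hiN))
    · show π₀.len ≤ (N : ℕ∞)
      rw [hlen0]; exact_mod_cast hN1
    · intro i hi
      rw [hlen0] at hi
      exact hs0 i (by exact_mod_cast hi)
    · intro i hi
      rw [hlen0] at hi
      exact ht0 i (by exact_mod_cast hi)
    · intro T hT k hk hrel
      have hkN : k ≤ N := by exact_mod_cast (show (k : ℕ∞) ≤ (N : ℕ∞) from hk)
      obtain ⟨i, hi1, hi2, hi3⟩ := hrel N (by exact_mod_cast hkN) le_rfl
      have hiN : i ≤ N := by exact_mod_cast (show (i : ℕ∞) ≤ (N : ℕ∞) from hi2)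
      have hieq : i = N := le_antisymm hiN hi1
      subst hieq
      obtain ⟨u, _, hu⟩ := hi3
      exact absurd hu (hN2 u)
  · -- no deadlock: infinite fair path
    push_neg at hD
    have hish : ∀ i, i < n₀ ∨ (n₀ ≤ i ∧ ∃ u : Tr, G.source u = s i) := by
      intro i
      by_cases hi : i < n₀
      · exact Or.inl hi
      · push_neg at hi
        exact Or.inr ⟨hi, hD i hi⟩
    refine ⟨⟨⊤, s, t, fun i _ => hsrc i (hish i), fun i _ => htgt i (hish i)⟩,
      ⟨le_top, ?_, ?_⟩, ?_⟩
    · intro i hi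
      rw [hlen0] at hi
      exact hs0 i (by exact_mod_cast hi)
    · intro i hi
      rw [hlen0] at hi
      exact ht0 i (by exact_mod_cast hi)
    · intro T hT k _ hrel
      by_contra hocc
      simp only [TSPath.occursFrom] at hocc
      push_neg at hocc
      have hocc' : ∀ i, k ≤ i → t i ∉ T := by
        intro i hki
        exact hocc i hki (by exact lt_of_le_of_ne le_top (by simp))
      have key : ∀ p : ℕ, ∃ i, p ≤ i ∧ k ≤ i ∧ n₀ ≤ i ∧ G.enabled T (s i) := by
        intro p
        obtain ⟨i, h1, _, h3⟩ := hrel (max p (max k n₀))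
          (le_max_of_le_right (le_max_left _ _)) le_top
        exact ⟨i, le_trans (le_max_left _ _) h1,
          le_trans (le_max_of_le_right (le_max_left _ _)) h1,
          le_trans (le_max_of_le_right (le_max_right _ _)) h1, h3⟩
      obtain ⟨i₀, _, hki₀, hn₀i₀, hen₀⟩ := key 0
      obtain ⟨j₀, hj₀⟩ := hE (s i₀) T hT hen₀
      set m := Nat.pair i₀ j₀ with hmdef
      have hTm : E (s (Nat.unpair m).1) (Nat.unpair m).2 = T := by
        rw [hmdef, Nat.unpair_pair]; exact hj₀
      have him : i₀ ≤ m := Nat.left_le_pair i₀ j₀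
      have hkm : k ≤ m := le_trans hki₀ him
      have hn₀m : n₀ ≤ m := le_trans hn₀i₀ him
      have pending : ∀ n, m ≤ n → G.enabled T (s n) → Pend G E s t n m := by
        intro n h1 h2
        exact ⟨h1, by rw [hTm]; exact h2,
          fun l hl _ => by rw [hTm]; exact hocc' l (le_trans hkm hl)⟩
      have good : ∀ n, m ≤ n → G.enabled T (s n) → ∃ m', Pend G E s t n m' :=
        fun n h1 h2 => ⟨m, pending n h1 h2⟩
      set μ : ℕ → ℕ := fun n => if h : ∃ m', Pend G E s t n m' then Nat.find h else 0 with hμdef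
      have hμ : ∀ n, m ≤ n → G.enabled T (s n) →
          Pend G E s t n (μ n) ∧ μ n < m ∧
            t n ∈ E (s (Nat.unpair (μ n)).1) (Nat.unpair (μ n)).2 := by
        intro n h1 h2
        have hA := good n h1 h2
        have hμn : μ n = Nat.find hA := by simp only [hμdef]; rw [dif_pos hA]
        obtain ⟨s', t', hs', ht', heq⟩ := htge n (le_trans hn₀m h1)
        have hdead : ∃ u, G.source u = s n := hD n (le_trans hn₀m h1)
        obtain ⟨hsrc', hmem⟩ := pickT_spec' G E (π₀.trans 0) hs' ht' hdead hA
        rw [← heq] at hmem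
        have hfind_le : Nat.find hA ≤ m := Nat.find_le (pending n h1 h2)
        have hne : Nat.find hA ≠ m := by
          intro hfm
          rw [hfm, hTm] at hmem
          exact hocc' n (le_trans hkm h1) hmem
        rw [hμn]
        exact ⟨Nat.find_spec hA, lt_of_le_of_ne hfind_le hne, hmem⟩
      have hinj : ∀ n n', m ≤ n → G.enabled T (s n) → m ≤ n' → G.enabled T (s n') →
          n < n' → μ n ≠ μ n' := by
        intro n n' h1 h2 h1' h2' hlt heq
        obtain ⟨hp, _, hmem⟩ := hμ n h1 h2
        obtain ⟨hp', _, _⟩ := hμ n' h1' h2'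
        exact hp'.2.2 n (heq ▸ hp.1) hlt (heq ▸ hmem)
      choose f hf1 hf2 hf3 hf4 using key
      set g : ℕ → ℕ := fun q => Nat.rec (f m) (fun _ prev => f (prev + 1)) q with hgdef
      have hgsucc : ∀ q, g q < g (q+1) := fun q => lt_of_lt_of_le (Nat.lt_succ_self _) (hf1 _)
      have hgen : ∀ q, G.enabled T (s (g q)) := by
        intro q; cases q
        · exact hf4 m
        · exact hf4 _
      have hgm : ∀ q, m ≤ g q := by
        intro q
        induction q with
        | zero => exact hf1 m
        | succ q ih => exact le_trans ih (le_of_lt (hgsucc q))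
      have hgmono : StrictMono g := strictMono_nat_of_lt_succ hgsucc
      have hF : Function.Injective
          (fun q : Fin (m+1) => (⟨μ (g q), (hμ (g q) (hgm q) (hgen q)).2.1⟩ : Fin m)) := by
        intro q q' hqq'
        by_contra hne
        have hv : μ (g q) = μ (g q') := congrArg Fin.val hqq'
        rcases lt_trichotomy (g (q : ℕ)) (g (q' : ℕ)) with h | h | h
        · exact hinj _ _ (hgm q) (hgen q) (hgm q') (hgen q') h hv
        · exact hne (Fin.ext (hgmono.injective h))
        · exact hinj _ _ (hgm q') (hgen q') (hgm q) (hgen q) h hv.symm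
      have hcard := Fintype.card_le_of_injective _ hF
      simp only [Fintype.card_fin] at hcard
      omega
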